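/- For every integer n ≥ 1, the number of n-step self-avoiding walks on the lattice strip ℤ × {−1,0,1,2} satisfies c_{[−1,2],n} ≤ b_{[−1,2],n+1} · ((n+1) + 2(n+1)² + 3(n+1)³ + 4(n+1)⁴ + 3(n+1)⁵ + 2(n+1)⁶ + (n+1)⁷), where b_{[−1,2],n+1} is the number of (n+1)-step bridges on ℤ × {−1,0,1,2}. -/

import Mathlib

open Filter Finset

/-- An `n`-step self-avoiding walk on the lattice strip `ℤ × {a,…,b}`:
a sequence of pairwise distinct points starting at the origin, with second
coordinates in `[a,b]`, each consecutive pair at `ℓ¹`-distance `1`. -/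
def IsSAW (a b : ℤ) (n : ℕ) (w : Fin (n + 1) → ℤ × ℤ) : Prop :=
  w 0 = (0, 0) ∧ Function.Injective w ∧
  (∀ i, a ≤ (w i).2 ∧ (w i).2 ≤ b) ∧
  ∀ i : Fin n, |(w i.succ).1 - (w i.castSucc).1| + |(w i.succ).2 - (w i.castSucc).2| = 1

/-- The number `c_{[a,b],n}` of `n`-step SAWs on the strip `ℤ × {a,…,b}`. -/
noncomputable def numSAW (a b : ℤ) (n : ℕ) : ℕ :=
  Nat.card {w : Fin (n + 1) → ℤ × ℤ // IsSAW a b n w}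

/-- An `n`-step bridge: a SAW with `x₀ < x_j ≤ x_n` for all `j ≠ 0`. -/
def IsBridge (a b : ℤ) (n : ℕ) (w : Fin (n + 1) → ℤ × ℤ) : Prop :=
  IsSAW a b n w ∧
  ∀ j : Fin (n + 1), j ≠ 0 → (w 0).1 < (w j).1 ∧ (w j).1 ≤ (w (Fin.last n)).1

/-- The number `b_{[a,b],n}` of `n`-step bridges on the strip `ℤ × {a,…,b}`. -/
noncomputable def numBridge (a b : ℤ) (n : ℕ) : ℕ :=
  Nat.card {w : Fin (n + 1) → ℤ × ℤ // IsBridge a b n w}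

/-- An `n`-step half-space walk: a SAW with `x₀ < x_j` for all `j ≠ 0`. -/
def IsHalfSpace (a b : ℤ) (n : ℕ) (w : Fin (n + 1) → ℤ × ℤ) : Prop :=
  IsSAW a b n w ∧ ∀ j : Fin (n + 1), j ≠ 0 → (w 0).1 < (w j).1

/-- The number `h_{[a,b],n}` of `n`-step half-space walks on `ℤ × {a,…,b}`. -/
noncomputable def numHalfSpace (a b : ℤ) (n : ℕ) : ℕ :=
  Nat.card {w : Fin (n + 1) → ℤ × ℤ // IsHalfSpace a b n w}

/-- The connective constant `μ_{[a,b]} = lim_{n→∞} (c_{[a,b],n})^(1/n)`. -/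
noncomputable def connConst (a b : ℤ) : ℝ :=
  limUnder atTop (fun n : ℕ => (numSAW a b n : ℝ) ^ ((n : ℝ)⁻¹))

namespace HWaux

open Finset

abbrev Pt := ℤ × ℤ

/-- reflect the suffix `[t,∞)` across the x-coordinate of `u t` -/
def refR (t : ℕ) (u : ℕ → Pt) : ℕ → Pt :=
  fun i => if i < t then u i else (2 * (u t).1 - (u i).1, (u i).2)

/-- reflect the prefix `[0,s]` across the x-coordinate of `u s` -/
def refL (s : ℕ) (u : ℕ → Pt) : ℕ → Pt :=
  fun i => if s < i then u i else (2 * (u s).1 - (u i).1, (u i).2)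

/-- translate in the x direction -/
def tr (d : ℤ) (u : ℕ → Pt) : ℕ → Pt := fun i => ((u i).1 + d, (u i).2)

lemma refR_at_t (t : ℕ) (u : ℕ → Pt) : refR t u t = u t := by
  simp only [refR, lt_irrefl, if_neg, if_false]
  have : 2 * (u t).1 - (u t).1 = (u t).1 := by ring
  rw [this]

lemma refL_at_s (s : ℕ) (u : ℕ → Pt) : refL s u s = u s := by
  simp only [refL, lt_irrefl, if_neg, if_false]
  have : 2 * (u s).1 - (u s).1 = (u s).1 := by ring
  rw [this]

lemma refR_invol (t : ℕ) (u : ℕ → Pt) : refR t (refR t u) = u := by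
  funext i
  by_cases h : i < t
  · simp [refR, h]
  · have ht : refR t u t = u t := refR_at_t t u
    simp only [refR, if_neg h, if_neg (lt_irrefl t)] at ht ⊢
    have h2 : 2 * (u t).1 - (2 * (u t).1 - (u i).1) = (u i).1 := by ring
    rw [show (2 * (u t).1 - (u t).1) = (u t).1 by ring]
    rw [h2]

lemma refL_invol (s : ℕ) (u : ℕ → Pt) : refL s (refL s u) = u := by
  funext i
  by_cases h : s < i
  · simp [refL, h]
  · simp only [refL, if_neg h, if_neg (lt_irrefl s)]
    rw [show (2 * (u s).1 - (u s).1) = (u s).1 by ring]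
    rw [show 2 * (u s).1 - (2 * (u s).1 - (u i).1) = (u i).1 by ring]

lemma refR_tr (t : ℕ) (d : ℤ) (u : ℕ → Pt) : refR t (tr d u) = tr d (refR t u) := by
  funext i
  by_cases h : i < t
  · simp [refR, tr, h]
  · simp only [refR, tr, if_neg h]
    rw [show 2 * ((u t).1 + d) - ((u i).1 + d) = 2 * (u t).1 - (u i).1 + d by ring]

lemma refL_tr (s : ℕ) (d : ℤ) (u : ℕ → Pt) : refL s (tr d u) = tr d (refL s u) := by
  funext i
  by_cases h : s < i
  · simp [refL, tr, h]
  · simp only [refL, tr, if_neg h]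
    rw [show 2 * ((u s).1 + d) - ((u i).1 + d) = 2 * (u s).1 - (u i).1 + d by ring]

lemma foldr_refR_tr (l : List ℕ) (d : ℤ) (u : ℕ → Pt) :
    List.foldr refR (tr d u) l = tr d (List.foldr refR u l) := by
  induction l with
  | nil => rfl
  | cons t l ih => simp [List.foldr, ih, refR_tr]

lemma foldr_refL_tr (l : List ℕ) (d : ℤ) (u : ℕ → Pt) :
    List.foldr refL (tr d u) l = tr d (List.foldr refL u l) := by
  induction l with
  | nil => rfl
  | cons s l ih => simp [List.foldr, ih, refL_tr]


structure Good (n : ℕ) (u : ℕ → Pt) : Prop where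
  y0 : (u 0).2 = 0
  inj : ∀ i ≤ n, ∀ j ≤ n, u i = u j → i = j
  rows : ∀ i ≤ n, -1 ≤ (u i).2 ∧ (u i).2 ≤ 2
  steps : ∀ i < n, |(u (i+1)).1 - (u i).1| + |(u (i+1)).2 - (u i).2| = 1
  capped : ∀ i, u i = u (min i n)

lemma Good.xstep {n u} (G : Good n u) : ∀ i < n, |(u (i+1)).1 - (u i).1| ≤ 1 := by
  intro i hi
  have := G.steps i hi
  have h1 : (0:ℤ) ≤ |(u (i+1)).2 - (u i).2| := abs_nonneg _
  omega

lemma Good.disp {n u} (G : Good n u) : ∀ k ≤ n, |(u k).1 - (u 0).1| ≤ (k : ℤ) := by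
  intro k
  induction k with
  | zero => intro _; simp
  | succ k ih =>
    intro hk
    have h1 := ih (by omega)
    have h2 := G.xstep k (by omega)
    have : |(u (k+1)).1 - (u 0).1| ≤ |(u (k+1)).1 - (u k).1| + |(u k).1 - (u 0).1| := by
      have := abs_sub_abs_le_abs_sub ((u (k+1)).1 - (u 0).1) ((u k).1 - (u 0).1)
      calc |(u (k+1)).1 - (u 0).1| = |((u (k+1)).1 - (u k).1) + ((u k).1 - (u 0).1)| := by ring_nf
        _ ≤ _ := abs_add_le _ _
    push_cast
    omega

/-- index of the first maximum of the x coordinate on `[0,n]` -/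
noncomputable def tmax (n : ℕ) (u : ℕ → Pt) : ℕ :=
  sInf {i | i ≤ n ∧ ∀ j ≤ n, (u j).1 ≤ (u i).1}

lemma tmax_mem (n : ℕ) (u : ℕ → Pt) :
    tmax n u ≤ n ∧ ∀ j ≤ n, (u j).1 ≤ (u (tmax n u)).1 := by
  have hne : {i | i ≤ n ∧ ∀ j ≤ n, (u j).1 ≤ (u i).1}.Nonempty := by
    obtain ⟨b, hb, hball⟩ := Finset.exists_max_image (Finset.range (n+1))
      (fun i => (u i).1) ⟨0, by simp⟩
    exact ⟨b, by have := Finset.mem_range.mp hb; omega, fun j hj => hball j (by simp; omega)⟩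
  exact Nat.sInf_mem hne

lemma tmax_lt_imp (n : ℕ) (u : ℕ → Pt) {i : ℕ} (hi : i < tmax n u) :
    (u i).1 < (u (tmax n u)).1 := by
  have hmem := tmax_mem n u
  have hni : i ∉ {i | i ≤ n ∧ ∀ j ≤ n, (u j).1 ≤ (u i).1} := Nat.notMem_of_lt_sInf hi
  have hin : i ≤ n := by omega
  simp only [Set.mem_setOf_eq, not_and, not_forall] at hni
  obtain ⟨j, hj, hgt⟩ := hni hin
  have := hmem.2 j hj
  omega

open Classical in
/-- index of the last minimum of the x coordinate on `[0,n]` -/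
noncomputable def smin (n : ℕ) (u : ℕ → Pt) : ℕ :=
  Nat.findGreatest (fun i => ∀ j ≤ n, (u i).1 ≤ (u j).1) n

lemma smin_le (n : ℕ) (u : ℕ → Pt) : smin n u ≤ n := Nat.findGreatest_le n

lemma smin_isMin (n : ℕ) (u : ℕ → Pt) : ∀ j ≤ n, (u (smin n u)).1 ≤ (u j).1 := by
  classical
  obtain ⟨b, hb, hball⟩ := Finset.exists_max_image (Finset.range (n+1))
    (fun i => -(u i).1) ⟨0, by simp⟩
  have hbn : b ≤ n := by have := Finset.mem_range.mp hb; omega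
  have hbP : ∀ j ≤ n, (u b).1 ≤ (u j).1 := by
    intro j hj
    have := hball j (by simp; omega)
    omega
  exact Nat.findGreatest_spec (P := fun i => ∀ j ≤ n, (u i).1 ≤ (u j).1) hbn hbP

lemma smin_gt_imp (n : ℕ) (u : ℕ → Pt) {j : ℕ} (hj : smin n u < j) (hjn : j ≤ n) :
    (u (smin n u)).1 < (u j).1 := by
  classical
  have h1 := Nat.findGreatest_is_greatest (P := fun i => ∀ j ≤ n, (u i).1 ≤ (u j).1)
    hj hjn
  simp only [not_forall] at h1
  obtain ⟨i, hi, hlt⟩ := h1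
  have h2 := smin_isMin n u i hi
  omega

open Classical in
noncomputable def phase1 (n : ℕ) : ℕ → (ℕ → Pt) → (ℕ → Pt) × List ℕ
  | 0, u => (u, [])
  | f+1, u =>
    if (∀ i ≤ n, (u i).1 ≤ (u n).1) then (u, [])
    else
      let r := phase1 n f (refR (tmax n u) u)
      (r.1, tmax n u :: r.2)

open Classical in
noncomputable def phase2 (n : ℕ) : ℕ → (ℕ → Pt) → (ℕ → Pt) × List ℕ
  | 0, u => (u, [])
  | f+1, u =>
    if (∀ i ≤ n, (u 0).1 ≤ (u i).1) then (u, [])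
    else
      let r := phase2 n f (refL (smin n u) u)
      (r.1, smin n u :: r.2)

lemma phase1_term {n f u} (h : ∀ i ≤ n, (u i).1 ≤ (u n).1) :
    phase1 n f u = (u, []) := by
  cases f with
  | zero => rfl
  | succ f => simp [phase1, if_pos h]

lemma phase1_rec {n f u} (h : ¬ ∀ i ≤ n, (u i).1 ≤ (u n).1) :
    phase1 n (f+1) u = ((phase1 n f (refR (tmax n u) u)).1,
      tmax n u :: (phase1 n f (refR (tmax n u) u)).2) := by
  simp [phase1, if_neg h]

lemma phase2_term {n f u} (h : ∀ i ≤ n, (u 0).1 ≤ (u i).1) :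
    phase2 n f u = (u, []) := by
  cases f with
  | zero => rfl
  | succ f => simp [phase2, if_pos h]

lemma phase2_rec {n f u} (h : ¬ ∀ i ≤ n, (u 0).1 ≤ (u i).1) :
    phase2 n (f+1) u = ((phase2 n f (refL (smin n u) u)).1,
      smin n u :: (phase2 n f (refL (smin n u) u)).2) := by
  simp [phase2, if_neg h]


-- abbreviations used repeatedly
section Preserve

variable {n : ℕ} {u : ℕ → Pt}

lemma not_term1_iff :
    (¬ ∀ i ≤ n, (u i).1 ≤ (u n).1) ↔ ∃ i ≤ n, (u n).1 < (u i).1 := by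
  push_neg; rfl

lemma tmax_gt_end (NT : ¬ ∀ i ≤ n, (u i).1 ≤ (u n).1) :
    (u n).1 < (u (tmax n u)).1 := by
  obtain ⟨i, hi, hgt⟩ := not_term1_iff.mp NT
  exact lt_of_lt_of_le hgt ((tmax_mem n u).2 i hi)

lemma tmax_lt_n (NT : ¬ ∀ i ≤ n, (u i).1 ≤ (u n).1) : tmax n u < n := by
  have h1 := (tmax_mem n u).1
  have h2 := tmax_gt_end NT
  rcases lt_or_eq_of_le h1 with h | h
  · exact h
  · rw [h] at h2; omega

lemma refR_val_lt {i : ℕ} (hi : i < tmax n u) : refR (tmax n u) u i = u i := by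
  simp [refR, hi]

lemma refR_val_ge {i : ℕ} (hi : tmax n u ≤ i) :
    refR (tmax n u) u i = (2 * (u (tmax n u)).1 - (u i).1, (u i).2) := by
  simp [refR, Nat.not_lt.mpr hi]

lemma refL_val_gt {i : ℕ} (hi : smin n u < i) : refL (smin n u) u i = u i := by
  simp [refL, hi]

lemma refL_val_le {i : ℕ} (hi : i ≤ smin n u) :
    refL (smin n u) u i = (2 * (u (smin n u)).1 - (u i).1, (u i).2) := by
  simp [refL, Nat.not_lt.mpr hi]

lemma refR_good (G : Good n u) (NT : ¬ ∀ i ≤ n, (u i).1 ≤ (u n).1) :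
    Good n (refR (tmax n u) u) := by
  set t := tmax n u with ht
  have htn : t ≤ n := (tmax_mem n u).1
  have hmax : ∀ j ≤ n, (u j).1 ≤ (u t).1 := (tmax_mem n u).2
  have hfirst : ∀ i < t, (u i).1 < (u t).1 := fun i hi => tmax_lt_imp n u hi
  constructor
  · by_cases h0 : 0 < t
    · rw [refR_val_lt h0]; exact G.y0
    · have : t ≤ 0 := by omega
      rw [refR_val_ge this]; exact G.y0
  · intro i hi j hj he
    by_cases hit : i < t <;> by_cases hjt : j < t
    · rw [refR_val_lt hit, refR_val_lt hjt] at he; exact G.inj i hi j hj he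
    · rw [refR_val_lt hit, refR_val_ge (by omega)] at he
      have h1 : (u i).1 = 2 * (u t).1 - (u j).1 := by
        have := congrArg Prod.fst he; simpa using this
      have h2 := hfirst i hit
      have h3 := hmax j hj
      omega
    · rw [refR_val_ge (by omega), refR_val_lt hjt] at he
      have h1 : 2 * (u t).1 - (u i).1 = (u j).1 := by
        have := congrArg Prod.fst he; simpa using this
      have h2 := hfirst j hjt
      have h3 := hmax i hi
      omega
    · rw [refR_val_ge (by omega), refR_val_ge (by omega)] at he
      have h1 : 2 * (u t).1 - (u i).1 = 2 * (u t).1 - (u j).1 := by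
        have := congrArg Prod.fst he; simpa using this
      have h2 : (u i).2 = (u j).2 := by
        have := congrArg Prod.snd he; simpa using this
      have h3 : (u i).1 = (u j).1 := by omega
      exact G.inj i hi j hj (Prod.ext h3 h2)
  · intro i hi
    by_cases hit : i < t
    · rw [refR_val_lt hit]; exact G.rows i hi
    · rw [refR_val_ge (by omega)]; exact G.rows i hi
  · intro k hk
    by_cases h1 : k + 1 ≤ t
    · by_cases h2 : k + 1 < t
      · rw [refR_val_lt h2, refR_val_lt (by omega)]; exact G.steps k hk
      · -- k + 1 = t
        have hkt : k + 1 = t := by omega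
        have : refR t u (k+1) = u (k+1) := by
          rw [hkt, ht]; exact refR_at_t _ _
        rw [this, refR_val_lt (by omega)]
        exact G.steps k hk
    · rw [refR_val_ge (by omega), refR_val_ge (by omega)]
      have := G.steps k hk
      rw [show 2 * (u t).1 - (u (k+1)).1 - (2 * (u t).1 - (u k).1) =
        -((u (k+1)).1 - (u k).1) by ring, abs_neg]
      exact this
  · intro i
    by_cases hi : i ≤ n
    · rw [min_eq_left hi]
    · rw [min_eq_right (by omega)]
      rw [refR_val_ge (by omega), refR_val_ge htn, G.capped i,
        min_eq_right (by omega)]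

lemma refR_x0 : (refR (tmax n u) u 0).1 = (u 0).1 := by
  by_cases h0 : 0 < tmax n u
  · rw [refR_val_lt h0]
  · have h1 : tmax n u = 0 := by omega
    rw [refR_val_ge (by omega)]
    simp only [h1]
    ring

lemma refR_xn : (refR (tmax n u) u n).1 = 2 * (u (tmax n u)).1 - (u n).1 := by
  rw [refR_val_ge (tmax_mem n u).1]

-- phase 2 versions
lemma not_term2_iff :
    (¬ ∀ i ≤ n, (u 0).1 ≤ (u i).1) ↔ ∃ i ≤ n, (u i).1 < (u 0).1 := by
  push_neg; rfl

lemma smin_lt_start (NT : ¬ ∀ i ≤ n, (u 0).1 ≤ (u i).1) :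
    (u (smin n u)).1 < (u 0).1 := by
  obtain ⟨i, hi, hlt⟩ := not_term2_iff.mp NT
  exact lt_of_le_of_lt (smin_isMin n u i hi) hlt

lemma smin_pos (NT : ¬ ∀ i ≤ n, (u 0).1 ≤ (u i).1) : 0 < smin n u := by
  have := smin_lt_start NT
  rcases Nat.eq_zero_or_pos (smin n u) with h | h
  · rw [h] at this; omega
  · exact h

def MaxEnd (n : ℕ) (u : ℕ → Pt) : Prop := ∀ i ≤ n, (u i).1 ≤ (u n).1

lemma refL_good (G : Good n u) (NT : ¬ ∀ i ≤ n, (u 0).1 ≤ (u i).1) :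
    Good n (refL (smin n u) u) := by
  set s := smin n u with hs
  have hsn : s ≤ n := smin_le n u
  have hmin : ∀ j ≤ n, (u s).1 ≤ (u j).1 := smin_isMin n u
  have hlast : ∀ j, s < j → j ≤ n → (u s).1 < (u j).1 := fun j h1 h2 => smin_gt_imp n u h1 h2
  constructor
  · have h0 : (0:ℕ) ≤ s := Nat.zero_le s
    rw [refL_val_le h0]; exact G.y0
  · intro i hi j hj he
    by_cases his : s < i <;> by_cases hjs : s < j
    · rw [refL_val_gt his, refL_val_gt hjs] at he; exact G.inj i hi j hj he
    · rw [refL_val_gt his, refL_val_le (by omega)] at he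
      have h1 : (u i).1 = 2 * (u s).1 - (u j).1 := by
        have := congrArg Prod.fst he; simpa using this
      have h2 := hlast i his hi
      have h3 := hmin j hj
      omega
    · rw [refL_val_le (by omega), refL_val_gt hjs] at he
      have h1 : 2 * (u s).1 - (u i).1 = (u j).1 := by
        have := congrArg Prod.fst he; simpa using this
      have h2 := hlast j hjs hj
      have h3 := hmin i hi
      omega
    · rw [refL_val_le (by omega), refL_val_le (by omega)] at he
      have h1 : 2 * (u s).1 - (u i).1 = 2 * (u s).1 - (u j).1 := by
        have := congrArg Prod.fst he; simpa using this
      have h2 : (u i).2 = (u j).2 := by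
        have := congrArg Prod.snd he; simpa using this
      have h3 : (u i).1 = (u j).1 := by omega
      exact G.inj i hi j hj (Prod.ext h3 h2)
  · intro i hi
    by_cases his : s < i
    · rw [refL_val_gt his]; exact G.rows i hi
    · rw [refL_val_le (by omega)]; exact G.rows i hi
  · intro k hk
    by_cases h1 : k + 1 ≤ s
    · rw [refL_val_le h1, refL_val_le (by omega)]
      have := G.steps k hk
      rw [show 2 * (u s).1 - (u (k+1)).1 - (2 * (u s).1 - (u k).1) =
        -((u (k+1)).1 - (u k).1) by ring, abs_neg]
      exact this
    · rw [refL_val_gt (by omega)]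
      by_cases h2 : s < k
      · rw [refL_val_gt h2]; exact G.steps k hk
      · have hks : k = s := by omega
        have : refL s u k = u k := by rw [hks, hs]; exact refL_at_s _ _
        rw [this]; exact G.steps k hk
  · intro i
    by_cases hi : i ≤ n
    · rw [min_eq_left hi]
    · rw [min_eq_right (by omega)]
      have hvn : refL s u n = u n := by
        by_cases h2 : s < n
        · exact refL_val_gt h2
        · have h3 : s = n := by omega
          rw [hs] at h3
          rw [show s = smin n u from hs, h3]; exact refL_at_s _ _
      rw [refL_val_gt (by omega), hvn, G.capped i, min_eq_right (by omega)]

lemma refL_xn : (refL (smin n u) u n).1 = (u n).1 := by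
  have hsn := smin_le n u
  by_cases h2 : smin n u < n
  · rw [refL_val_gt h2]
  · have he : smin n u = n := by omega
    rw [he, refL_at_s n u]

lemma refL_x0 : (refL (smin n u) u 0).1 = 2 * (u (smin n u)).1 - (u 0).1 := by
  rw [refL_val_le (Nat.zero_le _)]

lemma refL_maxEnd (G : Good n u) (ME : MaxEnd n u) (NT : ¬ ∀ i ≤ n, (u 0).1 ≤ (u i).1) :
    MaxEnd n (refL (smin n u) u) := by
  intro i hi
  rw [refL_xn]
  by_cases his : smin n u < i
  · rw [refL_val_gt his]; exact ME i hi
  · rw [refL_val_le (by omega)]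
    have h1 := smin_isMin n u i hi
    have h2 := smin_isMin n u n (le_refl n)
    have h3 := ME (smin n u) (smin_le n u)
    omega

end Preserve

section Run

variable {n : ℕ}

lemma phase1_good : ∀ f u, Good n u → Good n (phase1 n f u).1 := by
  intro f
  induction f with
  | zero => intro u G; exact G
  | succ f ih =>
    intro u G
    by_cases h : ∀ i ≤ n, (u i).1 ≤ (u n).1
    · rw [phase1_term h]; exact G
    · rw [phase1_rec h]; exact ih _ (refR_good G h)

lemma phase2_good : ∀ f u, Good n u ∧ MaxEnd n u →
    Good n (phase2 n f u).1 ∧ MaxEnd n (phase2 n f u).1 := by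
  intro f
  induction f with
  | zero => intro u G; exact G
  | succ f ih =>
    intro u G
    by_cases h : ∀ i ≤ n, (u 0).1 ≤ (u i).1
    · rw [phase2_term h]; exact G
    · rw [phase2_rec h]; exact ih _ ⟨refL_good G.1 h, refL_maxEnd G.1 G.2 h⟩

/-- termination measure -/
noncomputable def mu (n : ℕ) (u : ℕ → Pt) : ℕ := (n + ((u n).1 - (u 0).1)).toNat

lemma mu_le {u} (G : Good n u) : mu n u ≤ 2 * n := by
  have h := abs_le.mp (G.disp n (le_refl n))
  unfold mu
  omega

lemma mu_refR {u} (G : Good n u) (NT : ¬ ∀ i ≤ n, (u i).1 ≤ (u n).1) :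
    mu n u + 1 ≤ mu n (refR (tmax n u) u) := by
  have h1 := tmax_gt_end NT
  have h := abs_le.mp (G.disp n (le_refl n))
  unfold mu
  rw [refR_xn, refR_x0]
  omega

lemma mu_refL {u} (G : Good n u) (NT : ¬ ∀ i ≤ n, (u 0).1 ≤ (u i).1) :
    mu n u + 1 ≤ mu n (refL (smin n u) u) := by
  have h1 := smin_lt_start NT
  have h := abs_le.mp (G.disp n (le_refl n))
  unfold mu
  rw [refL_xn, refL_x0]
  have h2 := smin_isMin n u n (le_refl n)
  omega

lemma phase1_final : ∀ f u, Good n u → 2 * n + 1 ≤ f + mu n u →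
    MaxEnd n (phase1 n f u).1 := by
  intro f
  induction f with
  | zero =>
    intro u G hf
    exfalso
    have := mu_le G
    omega
  | succ f ih =>
    intro u G hf
    by_cases h : ∀ i ≤ n, (u i).1 ≤ (u n).1
    · rw [phase1_term h]; exact h
    · rw [phase1_rec h]
      exact ih _ (refR_good G h) (by have := mu_refR G h; omega)

def MinStart (n : ℕ) (u : ℕ → Pt) : Prop := ∀ i ≤ n, (u 0).1 ≤ (u i).1

lemma phase2_final : ∀ f u, Good n u → 2 * n + 1 ≤ f + mu n u →
    MinStart n (phase2 n f u).1 := by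
  intro f
  induction f with
  | zero =>
    intro u G hf
    exfalso
    have := mu_le G
    omega
  | succ f ih =>
    intro u G hf
    by_cases h : ∀ i ≤ n, (u 0).1 ≤ (u i).1
    · rw [phase2_term h]; exact h
    · rw [phase2_rec h]
      exact ih _ (refL_good G h) (by have := mu_refL G h; omega)

lemma phase1_undo : ∀ f u, List.foldr refR (phase1 n f u).1 (phase1 n f u).2 = u := by
  intro f
  induction f with
  | zero => intro u; rfl
  | succ f ih =>
    intro u
    by_cases h : ∀ i ≤ n, (u i).1 ≤ (u n).1
    · rw [phase1_term h]; rfl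
    · rw [phase1_rec h]
      simp only [List.foldr]
      rw [ih (refR (tmax n u) u), refR_invol]


lemma phase2_undo : ∀ f u, List.foldr refL (phase2 n f u).1 (phase2 n f u).2 = u := by
  intro f
  induction f with
  | zero => intro u; rfl
  | succ f ih =>
    intro u
    by_cases h : ∀ i ≤ n, (u 0).1 ≤ (u i).1
    · rw [phase2_term h]; rfl
    · rw [phase2_rec h]
      simp only [List.foldr]
      rw [ih (refL (smin n u) u), refL_invol]

lemma phase1_entries : ∀ f u, Good n u → ∀ x ∈ (phase1 n f u).2, x < n := by
  intro f
  induction f with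
  | zero => intro u _ x hx; simp [phase1] at hx
  | succ f ih =>
    intro u G x hx
    by_cases h : ∀ i ≤ n, (u i).1 ≤ (u n).1
    · rw [phase1_term h] at hx; simp at hx
    · rw [phase1_rec h] at hx
      rcases List.mem_cons.mp hx with h1 | h1
      · rw [h1]; exact tmax_lt_n h
      · exact ih _ (refR_good G h) x h1

lemma phase2_entries : ∀ f u, Good n u → ∀ x ∈ (phase2 n f u).2, 1 ≤ x ∧ x ≤ n := by
  intro f
  induction f with
  | zero => intro u _ x hx; simp [phase2] at hx
  | succ f ih =>
    intro u G x hx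
    by_cases h : ∀ i ≤ n, (u 0).1 ≤ (u i).1
    · rw [phase2_term h] at hx; simp at hx
    · rw [phase2_rec h] at hx
      rcases List.mem_cons.mp hx with h1 | h1
      · rw [h1]; exact ⟨smin_pos h, smin_le n u⟩
      · exact ih _ (refL_good G h) x h1

end Run


section Cross

open Classical in
noncomputable def cross (lam : ℤ) (a b : ℕ) (u : ℕ → Pt) : ℕ :=
  ((Finset.Ico a b).filter (fun k =>
    ((u k).1 = lam ∧ (u (k+1)).1 = lam+1) ∨ ((u k).1 = lam+1 ∧ (u (k+1)).1 = lam))).card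

variable {n : ℕ} {u : ℕ → Pt} {lam : ℤ} {a b c : ℕ}

lemma cross_add (hab : a ≤ b) (hbc : b ≤ c) :
    cross lam a b u + cross lam b c u = cross lam a c u := by
  classical
  unfold cross
  rw [← Finset.card_union_of_disjoint, ← Finset.filter_union,
    Finset.Ico_union_Ico_eq_Ico hab hbc]
  exact Finset.disjoint_filter_filter (Finset.Ico_disjoint_Ico_consecutive a b c)

lemma cross_mono (ha : a ≤ b) (hb : c ≥ b) (hd : a ≥ 0) :
    cross lam a b u ≤ cross lam a c u := by
  classical
  unfold cross
  apply Finset.card_le_card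
  apply Finset.filter_subset_filter
  exact Finset.Ico_subset_Ico (le_refl a) hb

lemma cross_mono_left (ha : c ≤ a) :
    cross lam a b u ≤ cross lam c b u := by
  classical
  unfold cross
  apply Finset.card_le_card
  apply Finset.filter_subset_filter
  exact Finset.Ico_subset_Ico ha (le_refl b)

lemma cross_one_of_mem (hk : a ≤ c) (hkb : c < b)
    (h : ((u c).1 = lam ∧ (u (c+1)).1 = lam+1) ∨ ((u c).1 = lam+1 ∧ (u (c+1)).1 = lam)) :
    1 ≤ cross lam a b u := by
  classical
  unfold cross
  rw [Nat.succ_le_iff, Finset.card_pos]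
  exact ⟨c, Finset.mem_filter.mpr ⟨Finset.mem_Ico.mpr ⟨hk, hkb⟩, h⟩⟩

lemma cross_ivt_down :
    ∀ b a, a ≤ b → lam+1 ≤ (u a).1 → (u b).1 ≤ lam →
    (∀ k, k < b → |(u (k+1)).1 - (u k).1| ≤ 1) →
    1 ≤ cross lam a b u := by
  intro b
  induction b with
  | zero =>
    intro a ha h1 h2 _
    interval_cases a
    omega
  | succ b ih =>
    intro a ha h1 h2 hstep
    by_cases hab : a = b + 1
    · rw [hab] at h1; omega
    · have hab' : a ≤ b := by omega
      by_cases h3 : lam + 1 ≤ (u b).1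
      · have h4 := abs_le.mp (hstep b (by omega))
        refine cross_one_of_mem hab' (by omega) (Or.inr ⟨?_, ?_⟩) <;> omega
      · have := ih a hab' h1 (by omega) (fun k hk => hstep k (by omega))
        calc 1 ≤ cross lam a b u := this
          _ ≤ cross lam a (b+1) u := cross_mono hab' (by omega) (by omega)

lemma cross_ivt_up :
    ∀ b a, a ≤ b → (u a).1 ≤ lam → lam+1 ≤ (u b).1 →
    (∀ k, k < b → |(u (k+1)).1 - (u k).1| ≤ 1) →
    1 ≤ cross lam a b u := by
  intro b
  induction b with
  | zero =>
    intro a ha h1 h2 _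
    interval_cases a
    omega
  | succ b ih =>
    intro a ha h1 h2 hstep
    by_cases hab : a = b + 1
    · rw [hab] at h1; omega
    · have hab' : a ≤ b := by omega
      by_cases h3 : (u b).1 ≤ lam
      · have h4 := abs_le.mp (hstep b (by omega))
        refine cross_one_of_mem hab' (by omega) (Or.inl ⟨?_, ?_⟩) <;> omega
      · have := ih a hab' h1 (by omega) (fun k hk => hstep k (by omega))
        calc 1 ≤ cross lam a b u := this
          _ ≤ cross lam a (b+1) u := cross_mono hab' (by omega) (by omega)

lemma cross_zero_of_ge (h : ∀ i, a ≤ i → i ≤ b → lam + 1 ≤ (u i).1) :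
    cross lam a b u = 0 := by
  classical
  unfold cross
  rw [Finset.card_eq_zero, Finset.filter_eq_empty_iff]
  intro k hk
  rw [Finset.mem_Ico] at hk
  have h1 := h k hk.1 (by omega)
  have h2 := h (k+1) (by omega) (by omega)
  omega

/-- transport of crossings through `refR` -/
lemma cross_refR (hta : tmax n u ≤ a) :
    cross lam a b (refR (tmax n u) u) = cross (2 * (u (tmax n u)).1 - lam - 1) a b u := by
  classical
  unfold cross
  congr 1
  apply Finset.filter_congr
  intro k hk
  rw [Finset.mem_Ico] at hk
  have hk1 : tmax n u ≤ k := le_trans hta hk.1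
  have hk2 : tmax n u ≤ k + 1 := by omega
  rw [refR_val_ge hk1, refR_val_ge hk2]
  constructor
  · rintro (⟨p, q⟩ | ⟨p, q⟩)
    · exact Or.inr ⟨by omega, by omega⟩
    · exact Or.inl ⟨by omega, by omega⟩
  · rintro (⟨p, q⟩ | ⟨p, q⟩)
    · exact Or.inr ⟨by omega, by omega⟩
    · exact Or.inl ⟨by omega, by omega⟩

/-- transport of crossings through `refL` -/
lemma cross_refL (hbs : b ≤ smin n u) :
    cross lam a b (refL (smin n u) u) = cross (2 * (u (smin n u)).1 - lam - 1) a b u := by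
  classical
  unfold cross
  congr 1
  apply Finset.filter_congr
  intro k hk
  rw [Finset.mem_Ico] at hk
  have hk1 : k ≤ smin n u := by omega
  have hk2 : k + 1 ≤ smin n u := by omega
  rw [refL_val_le hk1, refL_val_le hk2]
  constructor
  · rintro (⟨p, q⟩ | ⟨p, q⟩)
    · exact Or.inr ⟨by omega, by omega⟩
    · exact Or.inl ⟨by omega, by omega⟩
  · rintro (⟨p, q⟩ | ⟨p, q⟩)
    · exact Or.inr ⟨by omega, by omega⟩
    · exact Or.inl ⟨by omega, by omega⟩

/-- in the strip with 4 rows, any vertical line is crossed at most 4 times -/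
lemma cross_le_four (G : Good n u) (hb : b ≤ n) : cross lam a b u ≤ 4 := by
  classical
  unfold cross
  calc ((Finset.Ico a b).filter _).card ≤ (Finset.Icc (-1:ℤ) 2).card :=
        Finset.card_le_card_of_injOn (fun k => (u k).2) ?_ ?_
    _ = 4 := by rw [Int.card_Icc]; rfl
  · intro k hk
    have hk2 := Finset.mem_coe.mp hk
    rw [Finset.mem_filter, Finset.mem_Ico] at hk2
    have := G.rows k (by omega)
    rw [Finset.mem_coe, Finset.mem_Icc]
    exact this
  · intro k hk k' hk' hyy
    simp only [Finset.coe_filter, Set.mem_setOf_eq, Finset.mem_Ico] at hk hk'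
    obtain ⟨⟨hka, hkb⟩, hcr⟩ := hk
    obtain ⟨⟨hka', hkb'⟩, hcr'⟩ := hk'
    have hs := G.steps k (by omega)
    have hs' := G.steps k' (by omega)
    have hxabs : |(u (k+1)).1 - (u k).1| = 1 := by
      rcases hcr with ⟨p,q⟩|⟨p,q⟩ <;> rw [p, q] <;> ring_nf <;> norm_num
    have hxabs' : |(u (k'+1)).1 - (u k').1| = 1 := by
      rcases hcr' with ⟨p,q⟩|⟨p,q⟩ <;> rw [p, q] <;> ring_nf <;> norm_num
    have hy0 : (u (k+1)).2 - (u k).2 = 0 := by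
      have h1 := abs_nonneg ((u (k+1)).2 - (u k).2)
      have h2 : |(u (k+1)).2 - (u k).2| = 0 := by omega
      exact abs_eq_zero.mp h2
    have hy0' : (u (k'+1)).2 - (u k').2 = 0 := by
      have h1 := abs_nonneg ((u (k'+1)).2 - (u k').2)
      have h2 : |(u (k'+1)).2 - (u k').2| = 0 := by omega
      exact abs_eq_zero.mp h2
    simp only at hyy
    have key : (u k = u k' ∧ u (k+1) = u (k'+1)) ∨ (u k = u (k'+1) ∧ u (k+1) = u k') := by
      rcases hcr with ⟨p,q⟩|⟨p,q⟩ <;> rcases hcr' with ⟨p',q'⟩|⟨p',q'⟩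
      · exact Or.inl ⟨Prod.ext (by omega) (by omega), Prod.ext (by omega) (by omega)⟩
      · exact Or.inr ⟨Prod.ext (by omega) (by omega), Prod.ext (by omega) (by omega)⟩
      · exact Or.inr ⟨Prod.ext (by omega) (by omega), Prod.ext (by omega) (by omega)⟩
      · exact Or.inl ⟨Prod.ext (by omega) (by omega), Prod.ext (by omega) (by omega)⟩
    rcases key with ⟨p, q⟩ | ⟨p, q⟩
    · exact G.inj k (by omega) k' (by omega) p
    · have e1 := G.inj k (by omega) (k'+1) (by omega) p
      have e2 := G.inj (k+1) (by omega) k' (by omega) q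
      omega

end Cross



section Count

variable {n : ℕ}

def AB : ℕ → ℕ × ℕ
  | 0 => (0, 0)
  | 1 => (0, 1)
  | (k+2) => ((AB (k+1)).2 + 1, (AB (k+1)).1 + 1)

def ab2 : ℕ → ℕ × ℕ
  | 0 => (0, 0)
  | 1 => (2, 0)
  | (k+2) => (max (ab2 (k+1)).2 1 + 1, (ab2 (k+1)).1 + 1)

lemma phase1_ne_nil_imp {f : ℕ} {u : ℕ → Pt} (h : 1 ≤ (phase1 n f u).2.length) :
    ¬ ∀ i ≤ n, (u i).1 ≤ (u n).1 := by
  intro hterm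
  rw [phase1_term hterm] at h
  simp at h

lemma ab2_succ_fst (k : ℕ) : (ab2 (k+1)).1 = max (ab2 k).2 1 + 1 := by
  cases k with
  | zero => rfl
  | succ k => rfl

lemma phase2_ne_nil_imp {f : ℕ} {u : ℕ → Pt} (h : 1 ≤ (phase2 n f u).2.length) :
    ¬ ∀ i ≤ n, (u 0).1 ≤ (u i).1 := by
  intro hterm
  rw [phase2_term hterm] at h
  simp at h

lemma tmax_le_refR {u : ℕ → Pt} {n : ℕ} : tmax n u ≤ tmax n (refR (tmax n u) u) := by
  by_contra hc
  push_neg at hc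
  have h1 : (refR (tmax n u) u (tmax n (refR (tmax n u) u))).1
      = (u (tmax n (refR (tmax n u) u))).1 :=
    congrArg Prod.fst (refR_val_lt hc)
  have h2 : (refR (tmax n u) u (tmax n u)).1 = (u (tmax n u)).1 :=
    congrArg Prod.fst (refR_at_t _ _)
  have h3 := (tmax_mem n (refR (tmax n u) u)).2 (tmax n u) (tmax_mem n u).1
  have h4 := tmax_lt_imp n u hc
  rw [h1, h2] at h3
  omega

lemma refR_val1_ge {u : ℕ → Pt} {t i : ℕ} (hi : t ≤ i) :
    (refR t u i).1 = 2 * (u t).1 - (u i).1 := by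
  simp [refR, Nat.not_lt.mpr hi]

lemma refL_val1_le {u : ℕ → Pt} {s i : ℕ} (hi : i ≤ s) :
    (refL s u i).1 = 2 * (u s).1 - (u i).1 := by
  simp [refL, Nat.not_lt.mpr hi]

lemma phase1_count : ∀ k f u, Good n u → k ≤ (phase1 n f u).2.length →
    (AB k).1 ≤ cross ((u n).1 - 1) (tmax n u) n u ∧
    (AB k).2 ≤ cross ((u n).1) (tmax n u) n u := by
  intro k
  induction k with
  | zero => intro f u G _; exact ⟨Nat.zero_le _, Nat.zero_le _⟩
  | succ k ih =>
    intro f u G hlen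
    match f with
    | 0 => simp [phase1] at hlen
    | f + 1 =>
    have NT : ¬ ∀ i ≤ n, (u i).1 ≤ (u n).1 :=
      phase1_ne_nil_imp (f := f + 1) (le_trans (by omega) hlen)
    rw [phase1_rec (f := f) NT] at hlen
    simp only [List.length_cons] at hlen
    have G' : Good n (refR (tmax n u) u) := refR_good G NT
    have htn : tmax n u ≤ n := (tmax_mem n u).1
    have hmax : ∀ j ≤ n, (u j).1 ≤ (u (tmax n u)).1 := (tmax_mem n u).2
    have hMc : (u n).1 < (u (tmax n u)).1 := tmax_gt_end NT
    have ht'n : tmax n (refR (tmax n u) u) ≤ n := (tmax_mem n (refR (tmax n u) u)).1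
    have htt' : tmax n u ≤ tmax n (refR (tmax n u) u) := tmax_le_refR
    have hc'n : (refR (tmax n u) u n).1 = 2 * (u (tmax n u)).1 - (u n).1 :=
      refR_val1_ge htn
    have htrans1 : cross ((refR (tmax n u) u n).1) (tmax n (refR (tmax n u) u)) n
        (refR (tmax n u) u) = cross ((u n).1 - 1) (tmax n (refR (tmax n u) u)) n u := by
      rw [cross_refR htt', hc'n]
      congr 1
      ring
    have htrans2 : cross ((refR (tmax n u) u n).1 - 1) (tmax n (refR (tmax n u) u)) n
        (refR (tmax n u) u) = cross ((u n).1) (tmax n (refR (tmax n u) u)) n u := by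
      rw [cross_refR htt', hc'n]
      congr 1
      ring
    match k with
    | 0 =>
      refine ⟨Nat.zero_le _, ?_⟩
      show 1 ≤ cross ((u n).1) (tmax n u) n u
      apply cross_ivt_down n (tmax n u) htn (by omega) (by omega)
      intro j hj
      exact G.xstep j (by omega)
    | k + 1 =>
      have hlen' : k + 1 ≤ (phase1 n f (refR (tmax n u) u)).2.length := by omega
      obtain ⟨IH1, IH2⟩ := ih f (refR (tmax n u) u) G' hlen'
      rw [htrans1] at IH2
      rw [htrans2] at IH1
      have NT' : ¬ ∀ i ≤ n, (refR (tmax n u) u i).1 ≤ (refR (tmax n u) u n).1 :=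
        phase1_ne_nil_imp (f := f) (le_trans (by omega) hlen')
      have ht'c : (u (tmax n (refR (tmax n u) u))).1 ≤ (u n).1 - 1 := by
        obtain ⟨i, hi, hgt⟩ := not_term1_iff.mp NT'
        have h1 := (tmax_mem n (refR (tmax n u) u)).2 i hi
        have h2 : (refR (tmax n u) u (tmax n (refR (tmax n u) u))).1
            = 2 * (u (tmax n u)).1 - (u (tmax n (refR (tmax n u) u))).1 :=
          refR_val1_ge htt'
        have h4 := hmax i hi
        by_cases hit : i < tmax n u
        · have h3 : (refR (tmax n u) u i).1 = (u i).1 :=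
            congrArg Prod.fst (refR_val_lt hit)
          rw [hc'n] at hgt
          rw [h3] at hgt h1
          rw [h2] at h1
          have h5 := tmax_lt_imp n u hit
          omega
        · have h3 : (refR (tmax n u) u i).1 = 2 * (u (tmax n u)).1 - (u i).1 :=
            refR_val1_ge (by omega)
          rw [hc'n] at hgt
          rw [h3] at hgt h1
          rw [h2] at h1
          omega
      have hone1 : 1 ≤ cross ((u n).1 - 1) (tmax n u) (tmax n (refR (tmax n u) u)) u := by
        apply cross_ivt_down (tmax n (refR (tmax n u) u)) (tmax n u) htt' (by omega) (by omega)
        intro j hj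
        exact G.xstep j (by omega)
      have hone2 : 1 ≤ cross ((u n).1) (tmax n u) (tmax n (refR (tmax n u) u)) u := by
        apply cross_ivt_down (tmax n (refR (tmax n u) u)) (tmax n u) htt' (by omega) (by omega)
        intro j hj
        exact G.xstep j (by omega)
      have hsplit1 := (cross_add (u := u) (lam := (u n).1 - 1) htt' ht'n).symm
      have hsplit2 := (cross_add (u := u) (lam := (u n).1) htt' ht'n).symm
      constructor
      · show (AB (k+1)).2 + 1 ≤ _
        rw [hsplit1]
        omega
      · show (AB (k+1)).1 + 1 ≤ _
        rw [hsplit2]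
        omega

lemma phase1_len_le4 {f : ℕ} {u : ℕ → Pt} (G : Good n u) :
    (phase1 n f u).2.length ≤ 4 := by
  by_contra hc
  push_neg at hc
  obtain ⟨-, h2⟩ := phase1_count 5 f u G (by omega)
  have h3 : (AB 5).2 = 5 := rfl
  rw [h3] at h2
  have h4 : cross ((u n).1) (tmax n u) n u ≤ cross ((u n).1) 0 n u :=
    cross_mono_left (Nat.zero_le _)
  have h5 : cross ((u n).1) 0 n u ≤ 4 := cross_le_four G (le_refl n)
  omega

lemma phase2_count : ∀ k f u, Good n u → MaxEnd n u → k ≤ (phase2 n f u).2.length →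
    (ab2 k).1 ≤ cross ((u 0).1 - 1) 0 n u ∧
    (ab2 k).2 ≤ cross ((u 0).1) 0 n u := by
  intro k
  induction k with
  | zero => intro f u G ME _; exact ⟨Nat.zero_le _, Nat.zero_le _⟩
  | succ k ih =>
    intro f u G ME hlen
    match f with
    | 0 => simp [phase2] at hlen
    | f + 1 =>
    have NT : ¬ ∀ i ≤ n, (u 0).1 ≤ (u i).1 :=
      phase2_ne_nil_imp (f := f + 1) (le_trans (by omega) hlen)
    rw [phase2_rec (f := f) NT] at hlen
    simp only [List.length_cons] at hlen
    have G' : Good n (refL (smin n u) u) := refL_good G NT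
    have ME' : MaxEnd n (refL (smin n u) u) := refL_maxEnd G ME NT
    have hsn : smin n u ≤ n := smin_le n u
    have hmin : ∀ j ≤ n, (u (smin n u)).1 ≤ (u j).1 := smin_isMin n u
    have hmz : (u (smin n u)).1 < (u 0).1 := smin_lt_start NT
    have hz0 : (refL (smin n u) u 0).1 = 2 * (u (smin n u)).1 - (u 0).1 :=
      refL_val1_le (Nat.zero_le _)
    have hge : ∀ i, smin n u ≤ i → i ≤ n → (u (smin n u)).1 ≤ (refL (smin n u) u i).1 := by
      intro i h1 h2
      by_cases h3 : smin n u < i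
      · have h4 : (refL (smin n u) u i).1 = (u i).1 :=
          congrArg Prod.fst (refL_val_gt h3)
        rw [h4]; exact hmin i h2
      · have his : i = smin n u := by omega
        rw [his]
        have h4 : (refL (smin n u) u (smin n u)).1 = (u (smin n u)).1 :=
          congrArg Prod.fst (refL_at_s _ _)
        omega
    have hzero1 : cross ((refL (smin n u) u 0).1) (smin n u) n (refL (smin n u) u) = 0 := by
      apply cross_zero_of_ge
      intro i h1 h2
      have := hge i h1 h2
      rw [hz0]
      omega
    have hzero2 : cross ((refL (smin n u) u 0).1 - 1) (smin n u) n (refL (smin n u) u) = 0 := by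
      apply cross_zero_of_ge
      intro i h1 h2
      have := hge i h1 h2
      rw [hz0]
      omega
    have htransA : cross ((refL (smin n u) u 0).1) 0 n (refL (smin n u) u)
        = cross ((u 0).1 - 1) 0 (smin n u) u := by
      rw [← cross_add (Nat.zero_le (smin n u)) hsn, hzero1, Nat.add_zero]
      rw [cross_refL (le_refl _), hz0]
      congr 1
      ring
    have htransB : cross ((refL (smin n u) u 0).1 - 1) 0 n (refL (smin n u) u)
        = cross ((u 0).1) 0 (smin n u) u := by
      rw [← cross_add (Nat.zero_le (smin n u)) hsn, hzero2, Nat.add_zero]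
      rw [cross_refL (le_refl _), hz0]
      congr 1
      ring
    have hsplitA := (cross_add (u := u) (lam := (u 0).1 - 1) (Nat.zero_le (smin n u)) hsn).symm
    have hsplitB := (cross_add (u := u) (lam := (u 0).1) (Nat.zero_le (smin n u)) hsn).symm
    have honeA1 : 1 ≤ cross ((u 0).1 - 1) 0 (smin n u) u := by
      apply cross_ivt_down (smin n u) 0 (Nat.zero_le _) (by omega) (by omega)
      intro j hj
      exact G.xstep j (by omega)
    have honeA2 : 1 ≤ cross ((u 0).1 - 1) (smin n u) n u := by
      have hME := ME 0 (Nat.zero_le n)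
      apply cross_ivt_up n (smin n u) hsn (by omega) (by omega)
      intro j hj
      exact G.xstep j (by omega)
    have hIHA : (ab2 k).2 ≤ cross ((u 0).1 - 1) 0 (smin n u) u := by
      match k with
      | 0 => exact Nat.zero_le _
      | k + 1 =>
        have hlen' : k + 1 ≤ (phase2 n f (refL (smin n u) u)).2.length := by omega
        obtain ⟨-, IH2⟩ := ih f (refL (smin n u) u) G' ME' hlen'
        rw [htransA] at IH2
        exact IH2
    constructor
    · rw [ab2_succ_fst, hsplitA]
      have := max_le hIHA honeA1
      omega
    · match k with
      | 0 => exact Nat.zero_le _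
      | k + 1 =>
        show (ab2 (k+1)).1 + 1 ≤ _
        have hlen' : k + 1 ≤ (phase2 n f (refL (smin n u) u)).2.length := by omega
        obtain ⟨IH1, -⟩ := ih f (refL (smin n u) u) G' ME' hlen'
        rw [htransB] at IH1
        have NT' : ¬ ∀ i ≤ n, (refL (smin n u) u 0).1 ≤ (refL (smin n u) u i).1 :=
          phase2_ne_nil_imp (f := f) (le_trans (by omega) hlen')
        have hxn : (u 0).1 + 1 ≤ (u n).1 := by
          obtain ⟨i, hi, hlt⟩ := not_term2_iff.mp NT'
          by_cases h3 : smin n u < i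
          · have h4 : (refL (smin n u) u i).1 = (u i).1 :=
              congrArg Prod.fst (refL_val_gt h3)
            have h5 := hmin i hi
            rw [h4, hz0] at hlt
            omega
          · have h4 : (refL (smin n u) u i).1 = 2 * (u (smin n u)).1 - (u i).1 :=
              refL_val1_le (by omega)
            rw [h4, hz0] at hlt
            have h6 : (u 0).1 < (u i).1 := by omega
            have h7 := ME i hi
            omega
        have honeB : 1 ≤ cross ((u 0).1) (smin n u) n u := by
          apply cross_ivt_up n (smin n u) hsn (by omega) (by omega)
          intro j hj
          exact G.xstep j (by omega)
        rw [hsplitB]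
        omega

lemma phase2_len_le3 {f : ℕ} {u : ℕ → Pt} (G : Good n u) (ME : MaxEnd n u) :
    (phase2 n f u).2.length ≤ 3 := by
  by_contra hc
  push_neg at hc
  obtain ⟨-, h2⟩ := phase2_count 4 f u G ME (by omega)
  have h3 : (ab2 4).2 = 5 := rfl
  rw [h3] at h2
  have h5 : cross ((u 0).1) 0 n u ≤ 4 := cross_le_four G (le_refl n)
  omega

end Count



section Assemble

/-- ℕ-indexed version of a finite walk -/
def u0 (n : ℕ) (w : Fin (n+1) → Pt) : ℕ → Pt := fun i => w ⟨min i n, by omega⟩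

/-- bridge walk built from a walk with min at 0 and max at n -/
def bw (n : ℕ) (v : ℕ → Pt) : Fin (n+2) → Pt :=
  fun j => if (j : ℕ) = 0 then ((0:ℤ), (0:ℤ))
    else ((v ((j:ℕ) - 1)).1 - (v 0).1 + 1, (v ((j:ℕ) - 1)).2)

lemma bw_zero (n : ℕ) (v : ℕ → Pt) : bw n v 0 = ((0:ℤ), (0:ℤ)) := by
  simp [bw]

lemma bw_pos (n : ℕ) (v : ℕ → Pt) (j : Fin (n+2)) (hj : (j:ℕ) ≠ 0) :
    bw n v j = ((v ((j:ℕ) - 1)).1 - (v 0).1 + 1, (v ((j:ℕ) - 1)).2) := by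
  simp [bw, hj]

lemma good_of_saw {n : ℕ} {w : Fin (n+1) → Pt} (hw : IsSAW (-1) 2 n w) :
    Good n (u0 n w) := by
  obtain ⟨h0, hinj, hrows, hsteps⟩ := hw
  constructor
  · show (w ⟨min 0 n, _⟩).2 = 0
    have : (⟨min 0 n, by omega⟩ : Fin (n+1)) = 0 := by
      apply Fin.ext; simp
    rw [this, h0]
  · intro i hi j hj he
    have h1 : w ⟨min i n, by omega⟩ = w ⟨min j n, by omega⟩ := he
    have := hinj h1
    rw [Fin.mk.injEq] at this
    omega
  · intro i hi
    exact hrows _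
  · intro i hi
    have heq1 : u0 n w (i+1) = w ((⟨i, hi⟩ : Fin n).succ) := by
      show w _ = w _
      congr 1
      apply Fin.ext
      simp [Fin.val_succ]
      omega
    have heq2 : u0 n w i = w ((⟨i, hi⟩ : Fin n).castSucc) := by
      show w _ = w _
      congr 1
      apply Fin.ext
      simp [Fin.coe_castSucc]
      omega
    rw [heq1, heq2]
    exact hsteps ⟨i, hi⟩
  · intro i
    show w _ = w _
    congr 1
    apply Fin.ext
    show min i n = min (min i n) n
    omega

lemma bw_bridge {n : ℕ} {v : ℕ → Pt} (G : Good n v) (ME : MaxEnd n v) (MS : MinStart n v) :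
    IsBridge (-1) 2 (n+1) (bw n v) := by
  have hx1 : ∀ j : Fin (n+2), (j:ℕ) ≠ 0 → 1 ≤ (bw n v j).1 := by
    intro j hj
    rw [bw_pos n v j hj]
    have h1 : (j:ℕ) - 1 ≤ n := by have := j.isLt; omega
    have := MS ((j:ℕ)-1) h1
    omega
  refine ⟨⟨bw_zero n v, ?_, ?_, ?_⟩, ?_⟩
  · -- injectivity
    intro j j' he
    by_cases hj : (j:ℕ) = 0 <;> by_cases hj' : (j':ℕ) = 0
    · apply Fin.ext; omega
    · exfalso
      have h1 := hx1 j' hj'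
      rw [← he] at h1
      have h2 : bw n v j = ((0:ℤ),(0:ℤ)) := by
        have : j = 0 := by apply Fin.ext; simp only [Fin.val_zero]; exact hj
        rw [this]; exact bw_zero n v
      rw [h2] at h1
      norm_num at h1
    · exfalso
      have h1 := hx1 j hj
      rw [he] at h1
      have h2 : bw n v j' = ((0:ℤ),(0:ℤ)) := by
        have : j' = 0 := by apply Fin.ext; simp only [Fin.val_zero]; exact hj'
        rw [this]; exact bw_zero n v
      rw [h2] at h1
      norm_num at h1
    · rw [bw_pos n v j hj, bw_pos n v j' hj'] at he
      have h1 : (v ((j:ℕ)-1)).1 = (v ((j':ℕ)-1)).1 := by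
        have := congrArg Prod.fst he; simp only at this; omega
      have h2 : (v ((j:ℕ)-1)).2 = (v ((j':ℕ)-1)).2 := by
        have := congrArg Prod.snd he; simpa using this
      have h3 : (j:ℕ) - 1 ≤ n := by have := j.isLt; omega
      have h4 : (j':ℕ) - 1 ≤ n := by have := j'.isLt; omega
      have := G.inj _ h3 _ h4 (Prod.ext h1 h2)
      apply Fin.ext
      omega
  · -- rows
    intro j
    by_cases hj : (j:ℕ) = 0
    · have : j = 0 := by apply Fin.ext; simp only [Fin.val_zero]; exact hj
      rw [this, bw_zero]
      norm_num
    · rw [bw_pos n v j hj]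
      have h1 : (j:ℕ) - 1 ≤ n := by have := j.isLt; omega
      exact G.rows _ h1
  · -- steps
    intro i
    have hsv : ((i.succ : Fin (n+2)) : ℕ) = (i:ℕ) + 1 := Fin.val_succ i
    have hcv : ((i.castSucc : Fin (n+2)) : ℕ) = (i:ℕ) := Fin.coe_castSucc i
    rw [bw_pos n v i.succ (by omega)]
    rcases Nat.eq_zero_or_pos (i:ℕ) with h0 | hpos
    · have : i.castSucc = 0 := by
        apply Fin.ext; simp only [Fin.val_zero]; rw [hcv]; exact h0
      rw [this, bw_zero]
      simp only [hsv, h0]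
      show |(v 0).1 - (v 0).1 + 1 - 0| + |(v 0).2 - 0| = 1
      have ex : (v 0).1 - (v 0).1 + 1 - 0 = 1 := by ring
      have ey : (v 0).2 - 0 = 0 := by rw [G.y0]; ring
      rw [ex, ey]
      norm_num
    · rw [bw_pos n v i.castSucc (by omega)]
      simp only [hsv, hcv]
      have e1 : (i:ℕ) + 1 - 1 = ((i:ℕ) - 1) + 1 := by omega
      rw [e1]
      have hstep := G.steps ((i:ℕ)-1) (by have := i.isLt; omega)
      have e2 : (v ((i:ℕ)-1+1)).1 - (v 0).1 + 1 - ((v ((i:ℕ)-1)).1 - (v 0).1 + 1)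
          = (v ((i:ℕ)-1+1)).1 - (v ((i:ℕ)-1)).1 := by ring
      rw [e2]
      exact hstep
  · -- bridge inequalities
    intro j hj
    have hjv : (j:ℕ) ≠ 0 := by
      intro hc
      exact hj (by apply Fin.ext; simp only [Fin.val_zero]; exact hc)
    constructor
    · rw [bw_zero]
      have := hx1 j hjv
      omega
    · rw [bw_pos n v j hjv, bw_pos n v (Fin.last (n+1)) (by simp [Fin.val_last])]
      simp only [Fin.val_last]
      have h1 : (j:ℕ) - 1 ≤ n := by have := j.isLt; omega
      have h2 : (n:ℕ) + 1 - 1 = n := by omega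
      rw [h2]
      have := ME ((j:ℕ)-1) h1
      omega

/-- the two-stage unfolding -/
noncomputable def stage (n : ℕ) (w : Fin (n+1) → Pt) : (ℕ → Pt) × List ℕ × List ℕ :=
  ((phase2 n (2*n+1) (phase1 n (2*n+1) (u0 n w)).1).1,
   (phase1 n (2*n+1) (u0 n w)).2,
   (phase2 n (2*n+1) (phase1 n (2*n+1) (u0 n w)).1).2)

/-- recovery of the original walk from the bridge and the two lists -/
noncomputable def recov (n : ℕ) (B : Fin (n+2) → Pt) (l1 l2 : List ℕ) : Fin (n+1) → Pt :=
  fun i =>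
    ((List.foldr refR (List.foldr refL (fun j => B ⟨min (j+1) (n+1), by omega⟩) l2) l1 (i:ℕ)).1
      - (List.foldr refR (List.foldr refL (fun j => B ⟨min (j+1) (n+1), by omega⟩) l2) l1 0).1,
     (List.foldr refR (List.foldr refL (fun j => B ⟨min (j+1) (n+1), by omega⟩) l2) l1 (i:ℕ)).2)

lemma stage_recover {n : ℕ} (w : Fin (n+1) → Pt) (hw : IsSAW (-1) 2 n w) :
    recov n (bw n (stage n w).1) (stage n w).2.1 (stage n w).2.2 = w := by
  have G0 : Good n (u0 n w) := good_of_saw hw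
  have G1 : Good n (phase1 n (2*n+1) (u0 n w)).1 := phase1_good _ _ G0
  have G2 : Good n (stage n w).1 := (phase2_good _ _ ⟨G1, phase1_final _ _ G0 (by omega)⟩).1
  -- v equals a translate of the final walk
  set v2 : ℕ → Pt := (stage n w).1 with hv2
  have hv : (fun j => bw n v2 ⟨min (j+1) (n+1), by omega⟩)
      = tr (1 - (v2 0).1) v2 := by
    funext j
    have hne : (min (j+1) (n+1)) ≠ 0 := by omega
    rw [bw_pos n v2 ⟨min (j+1) (n+1), by omega⟩ hne]
    show (_, _) = (_, _)
    have e1 : min (j+1) (n+1) - 1 = min j n := by omega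
    rw [e1]
    have e2 : v2 (min j n) = v2 j := (G2.capped j).symm
    rw [e2]
    show ((v2 j).1 - (v2 0).1 + 1, (v2 j).2) = ((v2 j).1 + (1 - (v2 0).1), (v2 j).2)
    congr 1
    ring
  unfold recov
  rw [hv]
  rw [foldr_refL_tr, foldr_refR_tr]
  have hundo2 : List.foldr refL (stage n w).1 (stage n w).2.2
      = (phase1 n (2*n+1) (u0 n w)).1 := phase2_undo _ _
  have hundo1 : List.foldr refR (phase1 n (2*n+1) (u0 n w)).1 (stage n w).2.1
      = u0 n w := phase1_undo _ _
  rw [show (stage n w).1 = v2 from rfl] at hundo2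
  rw [hundo2, hundo1]
  funext i
  have hw0 : u0 n w 0 = ((0:ℤ), (0:ℤ)) := by
    show w ⟨min 0 n, _⟩ = _
    have : (⟨min 0 n, by omega⟩ : Fin (n+1)) = 0 := by apply Fin.ext; simp
    rw [this]; exact hw.1
  have hui : u0 n w (i:ℕ) = w i := by
    show w _ = w _
    congr 1
    apply Fin.ext
    simp
    omega
  show ((tr _ (u0 n w) (i:ℕ)).1 - (tr _ (u0 n w) 0).1, (tr _ (u0 n w) (i:ℕ)).2) = w i
  simp only [tr]
  rw [hw0, hui]
  show ((w i).1 + _ - (0 + _), (w i).2) = w i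
  have : (w i).1 + (1 - (v2 0).1) - (0 + (1 - (v2 0).1)) = (w i).1 := by ring
  rw [this]

lemma stage_bridge {n : ℕ} (w : Fin (n+1) → Pt) (hw : IsSAW (-1) 2 n w) :
    IsBridge (-1) 2 (n+1) (bw n (stage n w).1) := by
  have G0 : Good n (u0 n w) := good_of_saw hw
  have G1 : Good n (phase1 n (2*n+1) (u0 n w)).1 := phase1_good _ _ G0
  have ME1 : MaxEnd n (phase1 n (2*n+1) (u0 n w)).1 := phase1_final _ _ G0 (by omega)
  have h2 := phase2_good (2*n+1) _ ⟨G1, ME1⟩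
  have MS2 : MinStart n (stage n w).1 := phase2_final _ _ G1 (by omega)
  exact bw_bridge h2.1 h2.2 MS2

lemma stage_l1 {n : ℕ} (w : Fin (n+1) → Pt) (hw : IsSAW (-1) 2 n w) :
    (stage n w).2.1.length ≤ 4 ∧ ∀ x ∈ (stage n w).2.1, x < n := by
  have G0 : Good n (u0 n w) := good_of_saw hw
  exact ⟨phase1_len_le4 G0, phase1_entries _ _ G0⟩

lemma stage_l2 {n : ℕ} (w : Fin (n+1) → Pt) (hw : IsSAW (-1) 2 n w) :
    (stage n w).2.2.length ≤ 3 ∧ ∀ x ∈ (stage n w).2.2, 1 ≤ x ∧ x ≤ n := by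
  have G0 : Good n (u0 n w) := good_of_saw hw
  have G1 : Good n (phase1 n (2*n+1) (u0 n w)).1 := phase1_good _ _ G0
  have ME1 : MaxEnd n (phase1 n (2*n+1) (u0 n w)).1 := phase1_final _ _ G0 (by omega)
  exact ⟨phase2_len_le3 G1 ME1, phase2_entries _ _ G1⟩

end Assemble

section Encode

def D1 (n : ℕ) := Σ p : Fin 5, (Fin (p:ℕ) → Fin n)
def D2 (n : ℕ) := Σ q : Fin 4, (Fin (q:ℕ) → Fin n)

instance (n : ℕ) : Fintype (D1 n) := by unfold D1; infer_instance
instance (n : ℕ) : Fintype (D2 n) := by unfold D2; infer_instance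

def enc1 (n : ℕ) (l : List ℕ) (h4 : l.length ≤ 4) (he : ∀ x ∈ l, x < n) : D1 n :=
  ⟨⟨l.length, by omega⟩, fun i => ⟨l.get ⟨(i:ℕ), i.isLt⟩, he (l.get ⟨(i:ℕ), i.isLt⟩) (l.get_mem ⟨(i:ℕ), i.isLt⟩)⟩⟩

def enc2 (n : ℕ) (l : List ℕ) (h3 : l.length ≤ 3) (he : ∀ x ∈ l, 1 ≤ x ∧ x ≤ n)
    (hn : 1 ≤ n) : D2 n :=
  ⟨⟨l.length, by omega⟩, fun i =>
    ⟨l.get ⟨(i:ℕ), i.isLt⟩ - 1, by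
      have := he (l.get ⟨(i:ℕ), i.isLt⟩) (l.get_mem ⟨(i:ℕ), i.isLt⟩)
      omega⟩⟩

def dec1 (n : ℕ) (d : D1 n) : List ℕ := List.ofFn (fun i => ((d.2 i) : ℕ))

def dec2 (n : ℕ) (d : D2 n) : List ℕ := List.ofFn (fun i => ((d.2 i) : ℕ) + 1)

lemma dec1_enc1 (n : ℕ) (l : List ℕ) (h4 : l.length ≤ 4) (he : ∀ x ∈ l, x < n) :
    dec1 n (enc1 n l h4 he) = l := by
  unfold dec1 enc1
  apply List.ext_getElem
  · simp
  · intro k h1 h2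
    simp

lemma dec2_enc2 (n : ℕ) (l : List ℕ) (h3 : l.length ≤ 3) (he : ∀ x ∈ l, 1 ≤ x ∧ x ≤ n)
    (hn : 1 ≤ n) : dec2 n (enc2 n l h3 he hn) = l := by
  unfold dec2 enc2
  apply List.ext_getElem
  · simp
  · intro k h1 h2
    simp only [List.getElem_ofFn]
    have := he l[k] (l.getElem_mem h2)
    show l[k] - 1 + 1 = l[k]
    omega

lemma card_D1 (n : ℕ) : Nat.card (D1 n) = 1 + n + n^2 + n^3 + n^4 := by
  rw [Nat.card_eq_fintype_card]
  unfold D1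
  rw [Fintype.card_sigma]
  rw [Fin.sum_univ_five]
  simp only [Fintype.card_fun, Fintype.card_fin]
  norm_num [show ((0:Fin 5):ℕ) = 0 from rfl, show ((1:Fin 5):ℕ) = 1 from rfl,
    show ((2:Fin 5):ℕ) = 2 from rfl, show ((3:Fin 5):ℕ) = 3 from rfl,
    show ((4:Fin 5):ℕ) = 4 from rfl]

lemma card_D2 (n : ℕ) : Nat.card (D2 n) = 1 + n + n^2 + n^3 := by
  rw [Nat.card_eq_fintype_card]
  unfold D2
  rw [Fintype.card_sigma]
  rw [Fin.sum_univ_four]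
  simp only [Fintype.card_fun, Fintype.card_fin]
  norm_num [show ((0:Fin 4):ℕ) = 0 from rfl, show ((1:Fin 4):ℕ) = 1 from rfl,
    show ((2:Fin 4):ℕ) = 2 from rfl, show ((3:Fin 4):ℕ) = 3 from rfl]

end Encode

section Fin4

lemma saw_xbound {m : ℕ} {w : Fin (m+1) → Pt} (hw : IsSAW (-1) 2 m w) :
    ∀ k, ∀ h : k < m + 1, |(w ⟨k, h⟩).1| ≤ (k : ℤ) := by
  obtain ⟨h0, hinj, hrows, hsteps⟩ := hw
  intro k
  induction k with
  | zero =>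
    intro h
    have : (⟨0, h⟩ : Fin (m+1)) = 0 := by apply Fin.ext; simp
    rw [this, h0]
    simp
  | succ k ih =>
    intro h
    have hk : k < m := by omega
    have hstep := hsteps ⟨k, hk⟩
    have h1 := ih (by omega)
    have e1 : (⟨k, hk⟩ : Fin m).succ = ⟨k+1, h⟩ := by apply Fin.ext; simp
    have e2 : (⟨k, hk⟩ : Fin m).castSucc = ⟨k, by omega⟩ := by apply Fin.ext; simp
    rw [e1, e2] at hstep
    have h2 : |(w ⟨k+1, h⟩).1 - (w ⟨k, by omega⟩).1| ≤ 1 := by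
      have := abs_nonneg ((w ⟨k+1, h⟩).2 - (w ⟨k, by omega⟩).2)
      omega
    have h3 := abs_le.mp h1
    have h4 := abs_le.mp h2
    rw [abs_le]
    push_cast
    omega

lemma bridge_finite (m : ℕ) : Finite {w : Fin (m+1) → Pt // IsSAW (-1) 2 m w} := by
  classical
  let box : Finset Pt := Finset.Icc ((-(m:ℤ), (-1:ℤ)) : Pt) (((m:ℤ), (2:ℤ)) : Pt)
  have : ∀ (w : {w : Fin (m+1) → Pt // IsSAW (-1) 2 m w}) (i : Fin (m+1)),
      w.1 i ∈ box := by
    rintro ⟨w, hw⟩ i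
    rw [Finset.mem_Icc]
    have hb := saw_xbound hw (i:ℕ) i.isLt
    have : (⟨(i:ℕ), i.isLt⟩ : Fin (m+1)) = i := by apply Fin.ext; rfl
    rw [this] at hb
    have h2 := abs_le.mp hb
    have h3 := hw.2.2.1 i
    have h4 : ((i:ℕ) : ℤ) ≤ (m : ℤ) := by
      have := i.isLt; push_cast; omega
    constructor
    · exact Prod.mk_le_mk.mpr ⟨by omega, h3.1⟩
    · exact Prod.mk_le_mk.mpr ⟨by omega, h3.2⟩
  apply Finite.of_injective (fun w => (fun i => (⟨w.1 i, this w i⟩ : {x // x ∈ box})))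
  intro w w' he
  apply Subtype.ext
  funext i
  have := congrFun he i
  exact congrArg Subtype.val this

end Fin4



section Final

lemma saw_finite (m : ℕ) : Finite {w : Fin (m+1) → Pt // IsSAW (-1) 2 m w} :=
  bridge_finite m

lemma bridgeset_finite (m : ℕ) : Finite {w : Fin (m+1) → Pt // IsBridge (-1) 2 m w} := by
  have h := saw_finite m
  apply Finite.of_injective
    (fun b => (⟨b.1, b.2.1⟩ : {w : Fin (m+1) → Pt // IsSAW (-1) 2 m w}))
  intro x y hxy
  apply Subtype.ext
  simp only [Subtype.mk.injEq] at hxy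
  exact hxy

lemma saw_card_le (n : ℕ) (hn : 1 ≤ n) :
    numSAW (-1) 2 n ≤ numBridge (-1) 2 (n+1) * ((1+n+n^2+n^3+n^4) * (1+n+n^2+n^3)) := by
  classical
  have hfinB := bridgeset_finite (n+1)
  have hfinD1 : Finite (D1 n) := inferInstance
  have hfinD2 : Finite (D2 n) := inferInstance
  let F : {w : Fin (n+1) → Pt // IsSAW (-1) 2 n w} →
      {w : Fin (n+1+1) → Pt // IsBridge (-1) 2 (n+1) w} × D1 n × D2 n :=
    fun w => (⟨bw n (stage n w.1).1, stage_bridge w.1 w.2⟩,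
      enc1 n (stage n w.1).2.1 (stage_l1 w.1 w.2).1 (stage_l1 w.1 w.2).2,
      enc2 n (stage n w.1).2.2 (stage_l2 w.1 w.2).1 (stage_l2 w.1 w.2).2 hn)
  have hFinj : Function.Injective F := by
    intro x y hxy
    have hB : bw n (stage n x.1).1 = bw n (stage n y.1).1 :=
      congrArg Subtype.val (congrArg Prod.fst hxy)
    have h1 : (stage n x.1).2.1 = (stage n y.1).2.1 := by
      have h := congrArg (fun z => dec1 n z.2.1) hxy
      simp only [F] at h
      rw [dec1_enc1, dec1_enc1] at h
      exact h
    have h2 : (stage n x.1).2.2 = (stage n y.1).2.2 := by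
      have h := congrArg (fun z => dec2 n z.2.2) hxy
      simp only [F] at h
      rw [dec2_enc2, dec2_enc2] at h
      exact h
    apply Subtype.ext
    have hx := stage_recover x.1 x.2
    have hy := stage_recover y.1 y.2
    rw [← hx, ← hy, hB, h1, h2]
  have key := Nat.card_le_card_of_injective F hFinj
  rw [Nat.card_prod, Nat.card_prod, card_D1, card_D2] at key
  calc numSAW (-1) 2 n
      = Nat.card {w : Fin (n+1) → Pt // IsSAW (-1) 2 n w} := rfl
    _ ≤ Nat.card {w : Fin (n+1+1) → Pt // IsBridge (-1) 2 (n+1) w}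
        * ((1+n+n^2+n^3+n^4) * (1+n+n^2+n^3)) := by
        rw [← mul_assoc] at key
        rw [← mul_assoc]
        exact key
    _ = numBridge (-1) 2 (n+1) * ((1+n+n^2+n^3+n^4) * (1+n+n^2+n^3)) := rfl

end Final


end HWaux

/-- For `n ≥ 1`, `c_{[−1,2],n} ≤ b_{[−1,2],n+1} ·
((n+1) + 2(n+1)² + 3(n+1)³ + 4(n+1)⁴ + 3(n+1)⁵ + 2(n+1)⁶ + (n+1)⁷)`. -/
theorem stmt_14 (n : ℕ) (hn : 1 ≤ n) :
    numSAW (-1) 2 n ≤ numBridge (-1) 2 (n + 1) *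
      ((n + 1) + 2 * (n + 1) ^ 2 + 3 * (n + 1) ^ 3 + 4 * (n + 1) ^ 4 +
        3 * (n + 1) ^ 5 + 2 * (n + 1) ^ 6 + (n + 1) ^ 7) := by
  have h := HWaux.saw_card_le n hn
  have e : (n + 1) + 2 * (n + 1) ^ 2 + 3 * (n + 1) ^ 3 + 4 * (n + 1) ^ 4 +
        3 * (n + 1) ^ 5 + 2 * (n + 1) ^ 6 + (n + 1) ^ 7
      = (1+n+n^2+n^3+n^4) * (1+n+n^2+n^3)
        + (15 + 62*n + 113*n^2 + 120*n^3 + 80*n^4 + 33*n^5 + 7*n^6) := by ring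
  have harith : (1+n+n^2+n^3+n^4) * (1+n+n^2+n^3) ≤
      (n + 1) + 2 * (n + 1) ^ 2 + 3 * (n + 1) ^ 3 + 4 * (n + 1) ^ 4 +
        3 * (n + 1) ^ 5 + 2 * (n + 1) ^ 6 + (n + 1) ^ 7 := by
    rw [e]
    exact Nat.le_add_right _ _
  exact le_trans h (Nat.mul_le_mul_left _ harith)
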